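/- Let g ≥ 2, 0 ≤ d, and suppose σ is a partition of d of length exactly 2g-2-d. If σ arises as the housing partition of a stable tree with 2g-2-d vertices and total genus g (with no vertex contributing zero, i.e., every vertex v has 2g(v)-3+n(v) ≥ 1), then σ contains at least two even parts. -/

import Mathlib

open Finset

open scoped Classical in
/-- let `g ≥ 2` and let `σ` be a partition of `d` of length exactly
`2g-2-d ≥ 2`.  If `σ` arises as the housing partition of a stable tree with `2g-2-d`
vertices and total genus `g` in which every vertex contributes a positive value
(`2g(v) - 3 + n(v) ≥ 1`, so `σ` is the multiset of all the values `2g(v)-3+n(v)`),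
then `σ` contains at least two even parts. -/
theorem housing_partition_two_even_parts (g d : ℕ) (hg : 2 ≤ g)
    (hN : 2 ≤ 2 * g - 2 - d)
    (G : SimpleGraph (Fin (2 * g - 2 - d))) (hT : G.IsTree)
    (gv : Fin (2 * g - 2 - d) → ℕ) (hgv : (∑ v, gv v) = g)
    (hstable : ∀ v, 2 < 2 * gv v + G.degree v)
    (hpos : ∀ v, 1 ≤ 2 * gv v + G.degree v - 3)
    (σ : Multiset ℕ)
    (hσ : σ = (Finset.univ : Finset (Fin (2 * g - 2 - d))).val.map
        (fun v => 2 * gv v + G.degree v - 3))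
    (hlen : σ.card = 2 * g - 2 - d) (hsum : σ.sum = d) :
    2 ≤ (σ.filter (fun x => Even x)).card := by
  haveI : Nontrivial (Fin (2 * g - 2 - d)) := Fin.nontrivial_iff_two_le.mpr hN
  -- every vertex has positive degree
  have hdegpos : ∀ v, 0 < G.degree v := by
    intro v
    obtain ⟨w, hw⟩ := exists_ne v
    obtain ⟨p⟩ := hT.isConnected.preconnected v w
    rw [SimpleGraph.degree_pos_iff_exists_adj]
    exact ⟨p.getVert 1, p.adj_snd (SimpleGraph.Walk.not_nil_of_ne hw.symm)⟩
  -- there are at least two leaves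
  have hedges : #G.edgeFinset + 1 = 2 * g - 2 - d := by
    simpa using hT.card_edgeFinset
  have hdegsum : ∑ v, G.degree v = 2 * #G.edgeFinset :=
    SimpleGraph.sum_degrees_eq_twice_card_edges G
  have hScard : 2 ≤ #(Finset.univ.filter (fun v => G.degree v = 1)) := by
    by_contra h
    push_neg at h
    set S := Finset.univ.filter (fun v => G.degree v = 1) with hS
    have hsplit : ∑ v, G.degree v = ∑ v ∈ S, G.degree v + ∑ v ∈ Sᶜ, G.degree v := by
      rw [← Finset.sum_filter_add_sum_filter_not Finset.univ (fun v => G.degree v = 1)]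
      simp only [hS, Finset.compl_filter]
    have h1 : ∑ v ∈ S, G.degree v = #S := by
      rw [Finset.sum_congr rfl (fun v hv => (Finset.mem_filter.mp hv).2)]
      simp
      rfl
    have h2 : 2 * #Sᶜ ≤ ∑ v ∈ Sᶜ, G.degree v := by
      have h2' := Finset.card_nsmul_le_sum Sᶜ (fun v => G.degree v) 2 (fun v hv => by
        have hne : G.degree v ≠ 1 := by
          simp only [hS, Finset.mem_compl, Finset.mem_filter, Finset.mem_univ,
            true_and] at hv
          exact hv
        have := hdegpos v
        show 2 ≤ G.degree v
        omega)
      simpa [smul_eq_mul, mul_comm] using h2'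
    have hcompl : #Sᶜ = Fintype.card (Fin (2 * g - 2 - d)) - #S := Finset.card_compl S
    have hSle : #S ≤ Fintype.card (Fin (2 * g - 2 - d)) := Finset.card_le_univ S
    rw [Fintype.card_fin] at hcompl hSle
    omega
  obtain ⟨v, hv, w, hw, hvw⟩ := Finset.one_lt_card.mp hScard
  have hvdeg : G.degree v = 1 := (Finset.mem_filter.mp hv).2
  have hwdeg : G.degree w = 1 := (Finset.mem_filter.mp hw).2
  -- the values at v and w are even
  have heven : ∀ u, G.degree u = 1 → Even (2 * gv u + G.degree u - 3) := by
    intro u hu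
    have := hstable u
    rw [hu] at this ⊢
    obtain ⟨k, hk⟩ : ∃ k, gv u = k + 1 := ⟨gv u - 1, by omega⟩
    exact ⟨k, by omega⟩
  -- conclude
  rw [hσ, Multiset.filter_map, Multiset.card_map]
  have hsub : ({v, w} : Finset (Fin (2 * g - 2 - d))) ⊆
      Finset.univ.filter (fun u => Even (2 * gv u + G.degree u - 3)) := by
    intro u hu
    simp only [Finset.mem_insert, Finset.mem_singleton] at hu
    rcases hu with rfl | rfl
    · exact Finset.mem_filter.mpr ⟨Finset.mem_univ _, heven _ hvdeg⟩
    · exact Finset.mem_filter.mpr ⟨Finset.mem_univ _, heven _ hwdeg⟩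
  calc 2 = #({v, w} : Finset (Fin (2 * g - 2 - d))) := by
        rw [Finset.card_insert_of_notMem (by simpa using hvw), Finset.card_singleton]
    _ ≤ #(Finset.univ.filter (fun u => Even (2 * gv u + G.degree u - 3))) :=
        Finset.card_le_card hsub
    _ = Multiset.card (Multiset.filter
          ((fun x => Even x) ∘ fun v => 2 * gv v + G.degree v - 3)
          (Finset.univ : Finset (Fin (2 * g - 2 - d))).val) := by
        rw [Finset.card, Finset.filter_val]
        rfl
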